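/- For any simplicial complex K and vertex v of K, the Morse complex M(K ∨_v ℓ) of K with a leaf ℓ attached at v strongly collapses to the generalized Morse complex f((H(K) − v) ⊔ H(ℓ)), where H(K) − v is the Hasse diagram of K with the node v deleted. -/

import Mathlib

open Finset

/-- An abstract simplicial complex on vertex type `V`. -/
structure SComplex (V : Type*) where
  faces : Finset V → Prop
  not_empty : ¬ faces ∅
  down_closed : ∀ {σ τ : Finset V}, faces τ → σ ⊆ τ → σ.Nonempty → faces σ

/-- The complex generated by a set of simplices (downward closure). -/
def ofGens {V : Type*} (gens : Set (Finset V)) : SComplex V where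
  faces σ := σ.Nonempty ∧ ∃ τ ∈ gens, σ ⊆ τ
  not_empty h := by simpa using h.1
  down_closed := by
    rintro σ τ ⟨-, τ', hτ', hsub'⟩ hsub hne
    exact ⟨hne, τ', hτ', hsub.trans hsub'⟩

/-- A primitive (gradient) vector field on `K`: a single regular pair `(σ, τ)`
with `σ` a codimension-one face of `τ`. -/
structure VPair {V : Type*} (K : SComplex V) where
  lo : Finset V
  hi : Finset V
  lo_face : K.faces lo
  hi_face : K.faces hi
  lo_sub : lo ⊆ hi
  card_eq : hi.card = lo.card + 1

noncomputable instance {V : Type*} (K : SComplex V) : DecidableEq (VPair K) :=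
  Classical.decEq _

/-- Two primitive pairs share no simplex. -/
def VPair.Compatible {V : Type*} {K : SComplex V} (p q : VPair K) : Prop :=
  p.lo ≠ q.lo ∧ p.lo ≠ q.hi ∧ p.hi ≠ q.lo ∧ p.hi ≠ q.hi

/-- A discrete vector field: each simplex occurs in at most one pair. -/
def IsDVF {V : Type*} {K : SComplex V} (W : Set (VPair K)) : Prop :=
  ∀ p ∈ W, ∀ q ∈ W, p ≠ q → VPair.Compatible p q

/-- Existence of a nontrivial closed `V`-path. -/
def HasClosedPath {V : Type*} {K : SComplex V} (W : Set (VPair K)) : Prop :=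
  ∃ k : ℕ, 0 < k ∧ ∃ c : ZMod k → VPair K, (∀ i, c i ∈ W) ∧
    ∀ i, (c (i + 1)).lo ⊆ (c i).hi ∧ (c (i + 1)).lo ≠ (c i).lo ∧
      (c (i + 1)).lo.card + 1 = (c i).hi.card

/-- A gradient vector field: a discrete vector field with no nontrivial closed path. -/
def IsGVF {V : Type*} {K : SComplex V} (W : Set (VPair K)) : Prop :=
  IsDVF W ∧ ¬ HasClosedPath W

/-- The Morse complex of `K`: vertices are primitive gradient vector fields,
simplices are gradient vector fields. -/
def MorseComplex {V : Type*} (K : SComplex V) : SComplex (VPair K) where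
  faces S := S.Nonempty ∧ IsGVF {p | p ∈ S}
  not_empty h := by simpa using h.1
  down_closed := by
    rintro σ τ ⟨hne', hdvf, hnc⟩ hsub hne
    refine ⟨hne, fun p hp q hq hpq => hdvf p (hsub hp) q (hsub hq) hpq, fun h => hnc ?_⟩
    obtain ⟨k, hk, c, hc, hpath⟩ := h
    exact ⟨k, hk, c, fun i => hsub (hc i), hpath⟩

/-- The pure Morse complex: the subcomplex of `MorseComplex K` generated by the
facets of maximum dimension (maximum gradient vector fields). -/
def pureMorse {V : Type*} (K : SComplex V) : SComplex (VPair K) where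
  faces S := (MorseComplex K).faces S ∧ ∃ T : Finset (VPair K), S ⊆ T ∧
      (MorseComplex K).faces T ∧
      ∀ T' : Finset (VPair K), (MorseComplex K).faces T' → T'.card ≤ T.card
  not_empty h := (MorseComplex K).not_empty h.1
  down_closed := by
    rintro σ τ ⟨hτ, T, hsub', hT, hmax⟩ hsub hne
    exact ⟨(MorseComplex K).down_closed hτ hsub hne, T, hsub.trans hsub', hT, hmax⟩

/-- `σ` is a facet (maximal simplex) of `K`. -/
def IsFacet {V : Type*} (K : SComplex V) (σ : Finset V) : Prop :=
  K.faces σ ∧ ∀ τ, K.faces τ → σ ⊆ τ → σ = τ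

/-- `w` dominates `w'`: every facet containing `w'` contains `w`. -/
def Dominates {V : Type*} (K : SComplex V) (w w' : V) : Prop :=
  ∀ σ, IsFacet K σ → w' ∈ σ → w ∈ σ

/-- `K` is minimal: no vertex dominates another vertex. -/
def MinimalComplex {V : Type*} (K : SComplex V) : Prop :=
  ∀ w w' : V, K.faces {w} → K.faces {w'} → w ≠ w' → ¬ Dominates K w w'

/-- Strong collapsibility of a face predicate: a sequence of removals of
dominated vertices reaching a single point. -/
inductive SCAux {V : Type*} : (Finset V → Prop) → Prop
  | point (F : Finset V → Prop) (v : V) (h : ∀ σ, F σ ↔ σ = {v}) : SCAux F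
  | step (F : Finset V → Prop) (w w' : V) (hne : w ≠ w') (hw : F {w}) (hw' : F {w'})
      (hdom : ∀ σ, (F σ ∧ ∀ τ, F τ → σ ⊆ τ → σ = τ) → w' ∈ σ → w ∈ σ)
      (h : SCAux (fun σ => F σ ∧ w' ∉ σ)) : SCAux F

def StronglyCollapsible {V : Type*} (K : SComplex V) : Prop := SCAux K.faces

/-- `F` strongly collapses to `G` by a sequence of removals of dominated vertices. -/
inductive SCTo {V : Type*} : (Finset V → Prop) → (Finset V → Prop) → Prop
  | refl (F : Finset V → Prop) : SCTo F F
  | step (F G : Finset V → Prop) (w w' : V) (hne : w ≠ w') (hw : F {w}) (hw' : F {w'})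
      (hdom : ∀ σ, (F σ ∧ ∀ τ, F τ → σ ⊆ τ → σ = τ) → w' ∈ σ → w ∈ σ)
      (h : SCTo (fun σ => F σ ∧ w' ∉ σ) G) : SCTo F G

/-- Collapsibility (Forman): removal of free pairs down to a point. -/
inductive CollAux {V : Type*} : (Finset V → Prop) → Prop
  | point (F : Finset V → Prop) (v : V) (h : ∀ σ, F σ ↔ σ = {v}) : CollAux F
  | step (F : Finset V → Prop) (σ τ : Finset V) (hστ : σ ⊂ τ) (hσ : F σ) (hτ : F τ)
      (hfree : ∀ ρ, F ρ → σ ⊂ ρ → ρ = τ)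
      (h : CollAux (fun ρ => F ρ ∧ ρ ≠ σ ∧ ρ ≠ τ)) : CollAux F

def Collapsible {V : Type*} (K : SComplex V) : Prop := CollAux K.faces

/-- The degree of a vertex: the number of edges of `K` containing it. -/
noncomputable def sdeg {V : Type*} (K : SComplex V) (x : V) : ℕ :=
  Set.ncard {σ : Finset V | K.faces σ ∧ σ.card = 2 ∧ x ∈ σ}

/-- Image of a finset, with a classical decidability instance. -/
noncomputable def fimage {V W : Type*} (f : V → W) (σ : Finset V) : Finset W :=
  haveI := Classical.decEq W
  σ.image f

/-- An isomorphism between two simplicial complexes given by face predicates. -/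
structure ComplexIso {V W : Type*} (F : Finset V → Prop) (G : Finset W → Prop) where
  toFun : V → W
  invFun : W → V
  left_inv : ∀ x, F {x} → invFun (toFun x) = x
  right_inv : ∀ y, G {y} → toFun (invFun y) = y
  map_face : ∀ σ, F σ → G (fimage toFun σ)
  inv_face : ∀ τ, G τ → F (fimage invFun τ)

/-- The join of two simplicial complexes. -/
def sJoin {V W : Type*} [DecidableEq V] [DecidableEq W] (K : SComplex V) (L : SComplex W) :
    SComplex (V ⊕ W) :=
  ofGens {σ | ∃ α β, (K.faces α ∨ α = ∅) ∧ (L.faces β ∨ β = ∅) ∧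
    σ = α.image Sum.inl ∪ β.image Sum.inr}

/-- The disjoint union of two simplicial complexes. -/
def sDisjUnion {V W : Type*} [DecidableEq V] [DecidableEq W] (K : SComplex V) (L : SComplex W) :
    SComplex (V ⊕ W) :=
  ofGens ({σ | ∃ α, K.faces α ∧ σ = α.image Sum.inl} ∪
          {σ | ∃ β, L.faces β ∧ σ = β.image Sum.inr})

/-- The simplicial complex of a simple graph (vertices and edges). -/
def graphComplex {V : Type*} [DecidableEq V] (G : SimpleGraph V) : SComplex V :=
  ofGens ({σ | ∃ x, σ = {x}} ∪ {σ | ∃ x y, G.Adj x y ∧ σ = ({x, y} : Finset V)})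

/-- Attach a leaf (pendant edge) to `K` at the vertex `x`. -/
def attachLeaf {V : Type*} [DecidableEq V] (K : SComplex V) (x : V) : SComplex (V ⊕ Unit) :=
  ofGens ({σ | ∃ α, K.faces α ∧ σ = α.image Sum.inl} ∪
          {({Sum.inl x, Sum.inr ()} : Finset (V ⊕ Unit))})

/-- The cycle graph on `ZMod n`. -/
def cycleGraph (n : ℕ) : SimpleGraph (ZMod n) :=
  SimpleGraph.fromRel (fun i j => j = i + 1)

/-- Attach one new leaf to every vertex of a graph. -/
def addLeaves {V : Type*} [DecidableEq V] (G : SimpleGraph V) : SComplex (V ⊕ V) :=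
  ofGens ({σ | ∃ x y, G.Adj x y ∧ σ = ({Sum.inl x, Sum.inl y} : Finset (V ⊕ V))} ∪
          {σ | ∃ u, σ = ({Sum.inl u, Sum.inr u} : Finset (V ⊕ V))})

/-- The geometric realization of `K`, inside `V → ℝ`. -/
def realization {V : Type*} (K : SComplex V) : Set (V → ℝ) :=
  {f | ∃ σ, K.faces σ ∧ (∀ x, 0 ≤ f x) ∧ (∀ x, f x ≠ 0 → x ∈ σ) ∧ ∑ x ∈ σ, f x = 1}

/-- A Hasse-diagram edge of a poset: a covering pair. -/
structure HEdge (P : Type*) [PartialOrder P] where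
  lo : P
  hi : P
  cov : lo ⋖ hi

noncomputable instance {P : Type*} [PartialOrder P] : DecidableEq (HEdge P) :=
  Classical.decEq _

def HEdge.Compat {P : Type*} [PartialOrder P] (p q : HEdge P) : Prop :=
  p.lo ≠ q.lo ∧ p.lo ≠ q.hi ∧ p.hi ≠ q.lo ∧ p.hi ≠ q.hi

def HasPosetCycle {P : Type*} [PartialOrder P] (W : Set (HEdge P)) : Prop :=
  ∃ k : ℕ, 0 < k ∧ ∃ c : ZMod k → HEdge P, (∀ i, c i ∈ W) ∧
    ∀ i, (c (i + 1)).lo ⋖ (c i).hi ∧ (c (i + 1)).lo ≠ (c i).lo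

/-- The generalized Morse complex `f(P)` of a poset: simplices are acyclic
matchings of the Hasse diagram of `P`. -/
def genMorse (P : Type*) [PartialOrder P] : SComplex (HEdge P) where
  faces S := S.Nonempty ∧ (∀ p ∈ S, ∀ q ∈ S, p ≠ q → HEdge.Compat p q) ∧
    ¬ HasPosetCycle {p | p ∈ S}
  not_empty h := by simpa using h.1
  down_closed := by
    rintro σ τ ⟨-, hm, hc⟩ hsub hne
    refine ⟨hne, fun p hp q hq h => hm p (hsub hp) q (hsub hq) h, fun h => hc ?_⟩
    obtain ⟨k, hk, c, hc', hp⟩ := h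
    exact ⟨k, hk, c, fun i => hsub (hc' i), hp⟩

/-- The automorphism group of a simplicial complex, as a subgroup of `Perm V`. -/
def autGroup {V : Type*} [DecidableEq V] (K : SComplex V) : Subgroup (Equiv.Perm V) where
  carrier := {e | ∀ σ : Finset V, K.faces σ ↔ K.faces (σ.image e)}
  one_mem' := by intro σ; simp
  mul_mem' := by
    intro a b ha hb σ
    rw [hb σ, ha (σ.image b)]
    simp [Finset.image_image, Equiv.Perm.coe_mul]
  inv_mem' := by
    intro a ha σ
    have := ha (σ.image ⇑a⁻¹)
    simpa [Finset.image_image, Function.comp_def,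
      Finset.image_id'] using this.symm

/-- The full subcomplex of `K` on a set `S` of vertices. -/
def restrictTo {V : Type*} (K : SComplex V) (S : Set V) : Finset V → Prop :=
  fun σ => K.faces σ ∧ ∀ x ∈ σ, x ∈ S

/-- `S` spans a fully connected subcomplex: `K = (K∣S) * (K∣Sᶜ)`. -/
def FullyConnected {V : Type*} [DecidableEq V] (K : SComplex V) (S : Set V) : Prop :=
  ∀ σ : Finset V, K.faces σ ↔ (σ.Nonempty ∧ ∃ α β : Finset V,
    (restrictTo K S α ∨ α = ∅) ∧ ((K.faces β ∧ ∀ x ∈ β, x ∉ S) ∨ β = ∅) ∧ σ = α ∪ β)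

/-- The primitive pair `(x, xy)` on an edge `{x,y}`. -/
def edgePair {V : Type*} [DecidableEq V] (K : SComplex V) (x y : V) (hxy : x ≠ y)
    (h : K.faces {x, y}) : VPair K where
  lo := {x}
  hi := {x, y}
  lo_face := K.down_closed h (by simp) (Finset.singleton_nonempty x)
  hi_face := h
  lo_sub := by simp
  card_eq := by
    rw [Finset.card_singleton, Finset.card_insert_of_notMem (by simp [hxy]),
      Finset.card_singleton]

section Stmt19Aux

open Finset

theorem VPair.ext' {V : Type*} {K : SComplex V} {p q : VPair K}
    (h1 : p.lo = q.lo) (h2 : p.hi = q.hi) : p = q := by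
  cases p; cases q; dsimp at h1 h2; subst h1; subst h2; rfl

theorem HEdge.ext' {P : Type*} [PartialOrder P] {p q : HEdge P}
    (h1 : p.lo = q.lo) (h2 : p.hi = q.hi) : p = q := by
  cases p; cases q; dsimp at h1 h2; subst h1; subst h2; rfl

theorem VPair.Compatible.symm' {V : Type*} {K : SComplex V} {p q : VPair K}
    (h : VPair.Compatible p q) : VPair.Compatible q p :=
  ⟨h.1.symm, h.2.2.1.symm, h.2.1.symm, h.2.2.2.symm⟩

theorem SComplex.nonempty_of_faces {V : Type*} {K : SComplex V} {σ : Finset V}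
    (h : K.faces σ) : σ.Nonempty := by
  rcases σ.eq_empty_or_nonempty with rfl | hne
  · exact absurd h K.not_empty
  · exact hne

theorem gvf_singleton {V : Type*} {K : SComplex V} (p : VPair K) :
    IsGVF {q | q ∈ ({p} : Finset (VPair K))} := by
  constructor
  · intro a ha b hb hne
    simp only [Set.mem_setOf_eq, Finset.mem_singleton] at ha hb
    exact absurd (ha.trans hb.symm) hne
  · rintro ⟨k, hk, c, hc, hp⟩
    have h0 := (hp 0).2.1
    have h1 : c (0 + 1) = p := by simpa using hc (0 + 1)
    have h2 : c 0 = p := by simpa using hc 0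
    rw [h1, h2] at h0
    exact h0 rfl

theorem genMorse_singleton {P : Type*} [PartialOrder P] (p : HEdge P) :
    (genMorse P).faces {p} := by
  refine ⟨Finset.singleton_nonempty p, ?_, ?_⟩
  · intro a ha b hb hne
    simp only [Finset.mem_singleton] at ha hb
    exact absurd (ha.trans hb.symm) hne
  · rintro ⟨k, hk, c, hc, hp⟩
    have h0 := (hp 0).2
    have h1 : c (0 + 1) = p := by simpa using hc (0 + 1)
    have h2 : c 0 = p := by simpa using hc 0
    rw [h1, h2] at h0
    exact h0 rfl

theorem SCTo.trans {V : Type*} {F G H : Finset V → Prop}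
    (h1 : SCTo F G) (h2 : SCTo G H) : SCTo F H := by
  induction h1 with
  | refl => exact h2
  | step F G w w' hne hw hw' hdom h ih => exact SCTo.step F H w w' hne hw hw' hdom (ih h2)

/-- Covering in a subtype of finsets (ordered by inclusion) whose predicate is
closed under intermediate sets is characterized by cardinality. -/
theorem cov_subtype {α : Type*} {Pd : Finset α → Prop}
    (hne : ∀ {s}, Pd s → s.Nonempty)
    (hmid : ∀ {s u t : Finset α}, Pd s → Pd t → s ⊆ u → u ⊆ t → Pd u)
    (a b : {σ : Finset α // Pd σ}) :
    a ⋖ b ↔ a.1 ⊆ b.1 ∧ b.1.card = a.1.card + 1 := by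
  have hlt : ∀ (x y : {σ : Finset α // Pd σ}), x < y ↔ x.1 ⊂ y.1 := by
    intro x y
    rw [← Subtype.coe_lt_coe, Finset.lt_iff_ssubset]
  constructor
  · rintro ⟨h1, h2⟩
    rw [hlt] at h1
    refine ⟨h1.subset, ?_⟩
    by_contra hcard
    have hc1 : a.1.card < b.1.card := Finset.card_lt_card h1
    have hc2 : 1 + a.1.card ≤ b.1.card := by omega
    obtain ⟨u, hau, hub, hu⟩ := Finset.exists_subsuperset_card_eq (n := 1 + a.1.card) h1.subset (by omega) hc2
    have hPu : Pd u := hmid a.2 b.2 hau hub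
    have hlt1 : a < ⟨u, hPu⟩ := by
      rw [hlt]
      show a.1 ⊂ u
      exact Finset.ssubset_iff_subset_ne.2 ⟨hau, fun h => by rw [← h] at hu; omega⟩
    have hlt2 : (⟨u, hPu⟩ : {σ : Finset α // Pd σ}) < b := by
      rw [hlt]
      show u ⊂ b.1
      exact Finset.ssubset_iff_subset_ne.2 ⟨hub, fun h => by rw [h] at hu; omega⟩
    exact h2 hlt1 hlt2
  · rintro ⟨h1, h2⟩
    constructor
    · rw [hlt]
      exact Finset.ssubset_iff_subset_ne.2 ⟨h1, fun h => by rw [h] at h2; omega⟩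
    · intro x hx1 hx2
      rw [hlt] at hx1 hx2
      have := Finset.card_lt_card hx1
      have := Finset.card_lt_card hx2
      omega

theorem cov_inl {A B : Type*} [PartialOrder A] [PartialOrder B] {a b : A}
    (h : a ⋖ b) : (Sum.inl a : A ⊕ B) ⋖ Sum.inl b := by
  refine ⟨Sum.inl_lt_inl_iff.2 h.1, ?_⟩
  rintro (c | c) hc1 hc2
  · exact h.2 (Sum.inl_lt_inl_iff.1 hc1) (Sum.inl_lt_inl_iff.1 hc2)
  · exact Sum.not_inl_lt_inr hc1

theorem cov_inr {A B : Type*} [PartialOrder A] [PartialOrder B] {a b : B}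
    (h : a ⋖ b) : (Sum.inr a : A ⊕ B) ⋖ Sum.inr b := by
  refine ⟨Sum.inr_lt_inr_iff.2 h.1, ?_⟩
  rintro (c | c) hc1 hc2
  · exact Sum.not_inr_lt_inl hc1
  · exact h.2 (Sum.inr_lt_inr_iff.1 hc1) (Sum.inr_lt_inr_iff.1 hc2)

theorem cov_sum_cases {A B : Type*} [PartialOrder A] [PartialOrder B] {p q : A ⊕ B}
    (h : p ⋖ q) :
    (∃ a b, p = Sum.inl a ∧ q = Sum.inl b ∧ a ⋖ b) ∨
    (∃ a b, p = Sum.inr a ∧ q = Sum.inr b ∧ a ⋖ b) := by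
  obtain ⟨hlt, hmid⟩ := h
  cases p with
  | inl a =>
    cases q with
    | inl b =>
      refine Or.inl ⟨a, b, rfl, rfl, Sum.inl_lt_inl_iff.1 hlt, ?_⟩
      intro c hc1 hc2
      exact hmid (Sum.inl_lt_inl_iff.2 hc1) (Sum.inl_lt_inl_iff.2 hc2)
    | inr b => exact absurd hlt Sum.not_inl_lt_inr
  | inr a =>
    cases q with
    | inl b => exact absurd hlt Sum.not_inr_lt_inl
    | inr b =>
      refine Or.inr ⟨a, b, rfl, rfl, Sum.inr_lt_inr_iff.1 hlt, ?_⟩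
      intro c hc1 hc2
      exact hmid (Sum.inr_lt_inr_iff.2 hc1) (Sum.inr_lt_inr_iff.2 hc2)

end Stmt19Aux
namespace Stmt19

open Finset

variable {V : Type*} [DecidableEq V] (K : SComplex V) (v : V)

/-- The leaf edge. -/
def ee : Finset (V ⊕ Unit) := {Sum.inl v, Sum.inr ()}

variable {K v}

theorem inl_ne_inr (a : V) : (Sum.inl a : V ⊕ Unit) ≠ Sum.inr () := by simp

theorem card_ee : (ee v (V := V)).card = 2 := by
  rw [ee, Finset.card_insert_of_notMem (by simp), Finset.card_singleton]

theorem L_face_of_K {β : Finset V} (h : K.faces β) :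
    (attachLeaf K v).faces (β.image Sum.inl) := by
  refine ⟨(SComplex.nonempty_of_faces h).image _, β.image Sum.inl, ?_, subset_rfl⟩
  exact Set.mem_union_left _ ⟨β, h, rfl⟩

theorem L_face_sub_e {σ : Finset (V ⊕ Unit)} (h1 : σ.Nonempty) (h2 : σ ⊆ ee v) :
    (attachLeaf K v).faces σ :=
  ⟨h1, ee v, Set.mem_union_right _ rfl, h2⟩

theorem L_face_e : (attachLeaf K v).faces (ee v (V := V)) :=
  L_face_sub_e ⟨Sum.inl v, by simp [ee]⟩ subset_rfl

theorem face_with_w0 {σ : Finset (V ⊕ Unit)} (h : (attachLeaf K v).faces σ)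
    (hw : Sum.inr () ∈ σ) : σ ⊆ ee v := by
  obtain ⟨hne, τ, hτ, hsub⟩ := h
  rcases hτ with ⟨β, hβ, rfl⟩ | hτ
  · have := hsub hw
    simp only [Finset.mem_image] at this
    obtain ⟨a, -, ha⟩ := this
    exact absurd ha (inl_ne_inr a)
  · simp only [Set.mem_singleton_iff] at hτ
    rw [hτ] at hsub
    exact hsub

theorem face_without_w0 (hv : K.faces {v}) {σ : Finset (V ⊕ Unit)}
    (h : (attachLeaf K v).faces σ) (hw : Sum.inr () ∉ σ) :
    ∃ β, K.faces β ∧ σ = β.image Sum.inl := by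
  obtain ⟨hne, τ, hτ, hsub⟩ := h
  rcases hτ with ⟨α, hα, rfl⟩ | hτ
  · refine ⟨α.filter (fun a => Sum.inl a ∈ σ), ?_, ?_⟩
    · refine K.down_closed hα (Finset.filter_subset _ _) ?_
      obtain ⟨x, hx⟩ := hne
      obtain ⟨a, haα, rfl⟩ := Finset.mem_image.1 (hsub hx)
      exact ⟨a, Finset.mem_filter.2 ⟨haα, hx⟩⟩
    · ext x
      simp only [Finset.mem_image, Finset.mem_filter]
      constructor
      · intro hx
        obtain ⟨a, haα, rfl⟩ := Finset.mem_image.1 (hsub hx)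
        exact ⟨a, ⟨haα, hx⟩, rfl⟩
      · rintro ⟨a, ⟨-, ha⟩, rfl⟩
        exact ha
  · simp only [Set.mem_singleton_iff] at hτ
    subst hτ
    have hσ : σ ⊆ {Sum.inl v} := by
      intro x hx
      rcases Finset.mem_insert.1 (hsub hx) with rfl | hx'
      · simp
      · simp only [Finset.mem_singleton] at hx'
        subst hx'
        exact absurd hx hw
    refine ⟨{v}, hv, ?_⟩
    rw [Finset.image_singleton]
    rcases Finset.subset_singleton_iff.1 hσ with rfl | h
    · exact absurd hne (by simp)
    · exact h

variable (K v) in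
/-- The pair `({w}, vw)` on the leaf edge. -/
def pw : VPair (attachLeaf K v) where
  lo := {Sum.inr ()}
  hi := ee v
  lo_face := L_face_sub_e (Finset.singleton_nonempty _) (by simp [ee])
  hi_face := L_face_e
  lo_sub := by simp [ee]
  card_eq := by rw [card_ee, Finset.card_singleton]

variable (K v) in
/-- The pair `({v}, vw)` on the leaf edge. -/
def pv : VPair (attachLeaf K v) where
  lo := {Sum.inl v}
  hi := ee v
  lo_face := L_face_sub_e (Finset.singleton_nonempty _) (by simp [ee])
  hi_face := L_face_e
  lo_sub := by simp [ee]
  card_eq := by rw [card_ee, Finset.card_singleton]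

theorem pv_ne_pw : pv K v ≠ pw K v := by
  intro h
  have := congrArg VPair.lo h
  simp only [pv, pw, Finset.singleton_inj] at this
  exact inl_ne_inr v this

theorem hi_card_ge {q : VPair (attachLeaf K v)} : 2 ≤ q.hi.card := by
  have h1 := q.card_eq
  have h2 := Finset.card_pos.2 (SComplex.nonempty_of_faces q.lo_face)
  omega

/-- Any pair whose `hi` contains the leaf vertex is `pv` or `pw`. -/
theorem pair_with_w0 {q : VPair (attachLeaf K v)} (h : Sum.inr () ∈ q.hi) :
    q = pv K v ∨ q = pw K v := by
  have hsub : q.hi ⊆ ee v := face_with_w0 q.hi_face h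
  have hcard : (ee v (V := V)).card ≤ q.hi.card := by rw [card_ee]; exact hi_card_ge
  have hhi : q.hi = ee v :=
    Finset.eq_of_subset_of_card_le hsub (by rw [card_ee]; exact hi_card_ge)
  have hlo : q.lo.card = 1 := by
    have := q.card_eq
    rw [hhi, card_ee] at this
    omega
  obtain ⟨x, hx⟩ := Finset.card_eq_one.1 hlo
  have hxe : x ∈ ee v := by
    rw [← hhi]
    exact q.lo_sub (by rw [hx]; simp)
  rw [ee, Finset.mem_insert, Finset.mem_singleton] at hxe
  rcases hxe with rfl | rfl
  · exact Or.inl (VPair.ext' (by rw [hx]; rfl) (by rw [hhi]; rfl))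
  · exact Or.inr (VPair.ext' (by rw [hx]; rfl) (by rw [hhi]; rfl))

/-- Any pair whose `hi` is the leaf edge is `pv` or `pw`. -/
theorem pair_hi_e {q : VPair (attachLeaf K v)} (h : q.hi = ee v) :
    q = pv K v ∨ q = pw K v :=
  pair_with_w0 (by rw [h]; simp [ee])

/-- Any pair whose `lo` is `{w}` is `pw`. -/
theorem pair_lo_w0 {q : VPair (attachLeaf K v)} (h : q.lo = {Sum.inr ()}) :
    q = pw K v := by
  rcases pair_with_w0 (q := q) (q.lo_sub (by rw [h]; simp)) with h' | h'
  · exfalso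
    have := congrArg VPair.lo h'
    rw [h] at this
    exact inl_ne_inr v (by simpa [pv, eq_comm] using this)
  · exact h'

/-- A "bad" pair: must be removed in the strong collapse. -/
def Bad (q : VPair (attachLeaf K v)) : Prop :=
  q.lo = {Sum.inl v} ∧ q ≠ pv K v

theorem bad_ne_pw {q : VPair (attachLeaf K v)} (h : Bad q) : q ≠ pw K v := by
  intro h'
  have := congrArg VPair.lo h'
  rw [h.1] at this
  exact inl_ne_inr v (by simpa [pw] using this)

end Stmt19
namespace Stmt19

open Finset

variable {V : Type*} [DecidableEq V] {K : SComplex V} {v : V}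

/-- Key extension lemma: a gradient vector field not containing `pv` nor `pw`
can be extended by `pw`. -/
theorem extend_gvf {S : Finset (VPair (attachLeaf K v))}
    (hS : IsGVF {p | p ∈ S}) (hpv : pv K v ∉ S) (hpw : pw K v ∉ S) :
    IsGVF {p | p ∈ insert (pw K v) S} := by
  have compatpw : ∀ q ∈ S, VPair.Compatible (pw K v) q := by
    intro q hq
    refine ⟨?_, ?_, ?_, ?_⟩
    · intro h
      exact hpw (pair_lo_w0 h.symm ▸ hq)
    · intro h
      have : q.hi.card = 1 := by rw [← h]; rfl
      have := hi_card_ge (q := q)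
      omega
    · intro h
      -- q.lo = ee, so q.hi ⊋ ee but q.hi ⊆ ee
      have h1 : q.hi ⊆ ee v := face_with_w0 q.hi_face (q.lo_sub (by rw [← h]; simp [pw, ee]))
      have h2 := q.card_eq
      have h3 := Finset.card_le_card h1
      rw [← h] at h2
      simp only [pw, card_ee] at h2 h3
      omega
    · intro h
      rcases pair_hi_e (q := q) (by rw [← h]; rfl) with h' | h'
      · exact hpv (h' ▸ hq)
      · exact hpw (h' ▸ hq)
  constructor
  · intro p hp q hq hne
    simp only [Set.mem_setOf_eq, Finset.mem_insert] at hp hq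
    rcases hp with rfl | hp
    · rcases hq with rfl | hq
      · exact absurd rfl hne
      · exact compatpw q hq
    · rcases hq with rfl | hq
      · exact (compatpw p hp).symm'
      · exact hS.1 p hp q hq hne
  · rintro ⟨k, hk, c, hc, hp⟩
    have hnotpw : ∀ i, c i ≠ pw K v := by
      intro i hi
      obtain ⟨hsub, hne, hcard⟩ := hp (i - 1)
      rw [sub_add_cancel, hi] at hsub hne hcard
      have hw0 : Sum.inr () ∈ (c (i - 1)).hi := hsub (by simp [pw])
      have h1 : (c (i - 1)).hi ⊆ ee v := face_with_w0 (c (i - 1)).hi_face hw0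
      have h2 : (c (i - 1)).hi = ee v := by
        refine Finset.eq_of_subset_of_card_le h1 ?_
        rw [card_ee, ← hcard]
        rfl
      rcases pair_hi_e h2 with h' | h'
      · have := hc (i - 1)
        simp only [Set.mem_setOf_eq, Finset.mem_insert, h'] at this
        rcases this with h'' | h''
        · exact pv_ne_pw h''
        · exact hpv h''
      · rw [h'] at hne
        exact hne rfl
    refine hS.2 ⟨k, hk, c, fun i => ?_, hp⟩
    have := hc i
    simp only [Set.mem_setOf_eq, Finset.mem_insert] at this
    rcases this with h' | h'
    · exact absurd h' (hnotpw i)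
    · exact h'

theorem bad_pair_forces {S : Finset (VPair (attachLeaf K v))}
    (hS : IsDVF {p | p ∈ S}) {p : VPair (attachLeaf K v)} (hp : Bad p) (hpS : p ∈ S) :
    pv K v ∉ S := by
  intro hpv
  have hne : pv K v ≠ p := fun h => hp.2 h.symm
  have := (hS (pv K v) hpv p hpS hne).1
  rw [hp.1] at this
  exact this rfl

end Stmt19
namespace Stmt19

open Finset

variable {V : Type*} [Fintype V] [DecidableEq V] {K : SComplex V} {v : V}

noncomputable instance : Fintype (VPair (attachLeaf K v)) :=
  Fintype.ofInjective (fun p => (p.lo, p.hi))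
    (fun p q h => VPair.ext' (congrArg Prod.fst h) (congrArg Prod.snd h))

open Classical in
variable (K v) in
noncomputable def Bads : Finset (VPair (attachLeaf K v)) :=
  Finset.univ.filter Bad

theorem mem_Bads {q : VPair (attachLeaf K v)} : q ∈ Bads K v ↔ Bad q := by
  classical
  simp [Bads]

variable (K v) in
/-- The intermediate complexes of the strong collapse. -/
def Fr (R : Finset (VPair (attachLeaf K v))) : Finset (VPair (attachLeaf K v)) → Prop :=
  fun S => (MorseComplex (attachLeaf K v)).faces S ∧ ∀ p ∈ R, p ∉ S

theorem Fr_empty : Fr K v ∅ = (MorseComplex (attachLeaf K v)).faces := by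
  funext S
  simp only [Fr, Finset.notMem_empty, false_implies, implies_true, and_true]

theorem sc_step {R : Finset (VPair (attachLeaf K v))} {p : VPair (attachLeaf K v)}
    (hR : ∀ q ∈ R, Bad q) (hp : Bad p) (hpR : p ∉ R) :
    SCTo (Fr K v R) (Fr K v (insert p R)) := by
  have hne : pw K v ≠ p := fun h => bad_ne_pw hp h.symm
  refine SCTo.step _ _ (pw K v) p hne ?_ ?_ ?_ ?_
  · exact ⟨⟨Finset.singleton_nonempty _, gvf_singleton _⟩,
      fun q hq hq' => bad_ne_pw (hR q hq) (Finset.mem_singleton.1 hq')⟩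
  · exact ⟨⟨Finset.singleton_nonempty _, gvf_singleton _⟩,
      fun q hq hq' => hpR (Finset.mem_singleton.1 hq' ▸ hq)⟩
  · -- domination
    rintro σ ⟨⟨⟨hσne, hσgvf⟩, hσR⟩, hmax⟩ hpσ
    by_cases hpwσ : pw K v ∈ σ
    · exact hpwσ
    · have hpvσ : pv K v ∉ σ := bad_pair_forces hσgvf.1 hp hpσ
      have hF : Fr K v R (insert (pw K v) σ) := by
        refine ⟨⟨Finset.insert_nonempty _ _, extend_gvf hσgvf hpvσ hpwσ⟩, ?_⟩
        intro q hq
        simp only [Finset.mem_insert, not_or]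
        exact ⟨bad_ne_pw (hR q hq), hσR q hq⟩
      have := hmax _ hF (Finset.subset_insert _ _)
      rw [this]
      exact Finset.mem_insert_self _ _
  · have heq : (fun σ => Fr K v R σ ∧ p ∉ σ) = Fr K v (insert p R) := by
      funext S
      simp only [Fr, Finset.mem_insert]
      apply propext
      constructor
      · rintro ⟨⟨h1, h2⟩, h3⟩
        exact ⟨h1, fun q hq => by rcases hq with rfl | hq; exacts [h3, h2 q hq]⟩
      · rintro ⟨h1, h2⟩
        exact ⟨⟨h1, fun q hq => h2 q (Or.inr hq)⟩, h2 p (Or.inl rfl)⟩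
    rw [heq]
    exact SCTo.refl _

theorem sc_all (R : Finset (VPair (attachLeaf K v))) (hR : ∀ q ∈ R, Bad q) :
    SCTo (MorseComplex (attachLeaf K v)).faces (Fr K v R) := by
  induction R using Finset.induction with
  | empty => rw [Fr_empty]; exact SCTo.refl _
  | @insert p R hpR ih =>
    have hR' : ∀ q ∈ R, Bad q := fun q hq => hR q (Finset.mem_insert_of_mem hq)
    exact SCTo.trans (ih hR') (sc_step hR' (hR p (Finset.mem_insert_self _ _)) hpR)

theorem sc_main :
    SCTo (MorseComplex (attachLeaf K v)).faces (Fr K v (Bads K v)) :=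
  sc_all _ (fun _ hq => mem_Bads.1 hq)

theorem Fr_Bads_iff {S : Finset (VPair (attachLeaf K v))} :
    Fr K v (Bads K v) S ↔
      (MorseComplex (attachLeaf K v)).faces S ∧ ∀ q ∈ S, q.lo = {Sum.inl v} → q = pv K v := by
  constructor
  · rintro ⟨h1, h2⟩
    refine ⟨h1, fun q hq hlo => ?_⟩
    by_contra hne
    exact h2 q (mem_Bads.2 ⟨hlo, hne⟩) hq
  · rintro ⟨h1, h2⟩
    refine ⟨h1, fun q hq hqS => ?_⟩
    have hb := mem_Bads.1 hq
    exact hb.2 (h2 q hqS hb.1)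

end Stmt19
namespace Stmt19

open Finset

variable {V : Type*} [DecidableEq V] {K : SComplex V} {v : V}

theorem pg_faces (σ : Finset (Fin 2)) :
    (graphComplex (SimpleGraph.pathGraph 2)).faces σ ↔ σ.Nonempty := by
  constructor
  · exact fun h => h.1
  · intro h
    refine ⟨h, {0, 1}, ?_, ?_⟩
    · refine Set.mem_union_right _ ⟨0, 1, ?_, rfl⟩
      rw [SimpleGraph.pathGraph_adj]
      exact Or.inl (by decide)
    · intro x _
      fin_cases x <;> simp

/-- The second summand of the target poset: faces of the single edge. -/
abbrev QQ := {σ : Finset (Fin 2) // (graphComplex (SimpleGraph.pathGraph 2)).faces σ}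

def q0 : QQ := ⟨{0}, (pg_faces _).2 (Finset.singleton_nonempty _)⟩
def q1 : QQ := ⟨{1}, (pg_faces _).2 (Finset.singleton_nonempty _)⟩
def q01 : QQ := ⟨{0, 1}, (pg_faces _).2 ⟨0, by simp⟩⟩

variable (K v) in
/-- The target poset. -/
abbrev PP := {σ : Finset V // K.faces σ ∧ σ ≠ {v}} ⊕ QQ

theorem covL (a b : {σ : Finset V // K.faces σ ∧ σ ≠ {v}}) :
    a ⋖ b ↔ a.1 ⊆ b.1 ∧ b.1.card = a.1.card + 1 := by
  refine cov_subtype (fun hs => SComplex.nonempty_of_faces hs.1) ?_ a b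
  rintro s u t ⟨hs1, hs2⟩ ⟨ht1, -⟩ hsu hut
  refine ⟨K.down_closed ht1 hut ((SComplex.nonempty_of_faces hs1).mono hsu), ?_⟩
  intro h
  apply hs2
  have h2 : s ⊆ {v} := by rw [← h]; exact hsu
  rcases Finset.subset_singleton_iff.1 h2 with rfl | h'
  · exact absurd hs1 K.not_empty
  · exact h'

theorem covQ (a b : QQ) : a ⋖ b ↔ a.1 ⊆ b.1 ∧ b.1.card = a.1.card + 1 := by
  refine cov_subtype (fun hs => (pg_faces _).1 hs) ?_ a b
  rintro s u t hs ht hsu hut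
  exact (pg_faces _).2 (((pg_faces _).1 hs).mono hsu)

theorem fin2_cases : ∀ σ : Finset (Fin 2), σ = ∅ ∨ σ = {0} ∨ σ = {1} ∨ σ = {0, 1} := by
  decide

theorem qq_cases (a : QQ) : a = q0 ∨ a = q1 ∨ a = q01 := by
  rcases fin2_cases a.1 with h | h | h | h
  · exact absurd ((pg_faces _).1 a.2) (by rw [h]; simp)
  · exact Or.inl (Subtype.ext h)
  · exact Or.inr (Or.inl (Subtype.ext h))
  · exact Or.inr (Or.inr (Subtype.ext h))

theorem cov_q0_q01 : (q0 : QQ) ⋖ q01 := by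
  rw [covQ]
  refine ⟨by decide, by decide⟩

theorem cov_q1_q01 : (q1 : QQ) ⋖ q01 := by
  rw [covQ]
  refine ⟨by decide, by decide⟩

theorem q_cov_hi {a b : QQ} (h : a ⋖ b) : b = q01 := by
  rcases qq_cases b with rfl | rfl | rfl
  · rcases qq_cases a with rfl | rfl | rfl <;>
      · rw [covQ] at h
        revert h; decide
  · rcases qq_cases a with rfl | rfl | rfl <;>
      · rw [covQ] at h
        revert h; decide
  · rfl

variable (v) in
def gg : Fin 2 → V ⊕ Unit := fun i => if i = 0 then Sum.inl v else Sum.inr ()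

theorem gg_inj : Function.Injective (gg v (V := V)) := by
  intro i j h
  fin_cases i <;> fin_cases j <;> simp_all [gg]

theorem img_q0 : ({0} : Finset (Fin 2)).image (gg v) = {Sum.inl v} := by simp [gg]
theorem img_q1 : ({1} : Finset (Fin 2)).image (gg v) = {Sum.inr ()} := by
  rw [Finset.image_singleton]
  norm_num [gg]
theorem img_q01 : ({0, 1} : Finset (Fin 2)).image (gg v) = ee v := by
  rw [Finset.image_insert, Finset.image_singleton, ee]
  norm_num [gg]

variable (K v) in
noncomputable def eltToFace : PP K v → Finset (V ⊕ Unit) :=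
  Sum.elim (fun α => α.1.image Sum.inl) (fun σ => σ.1.image (gg v))

theorem elt_face (p : PP K v) : (attachLeaf K v).faces (eltToFace K v p) := by
  cases p with
  | inl α => exact L_face_of_K α.2.1
  | inr σ =>
    refine L_face_sub_e (((pg_faces _).1 σ.2).image _) ?_
    intro x hx
    obtain ⟨i, -, rfl⟩ := Finset.mem_image.1 hx
    rcases Classical.em (i = 0) with rfl | h
    · simp [gg, ee]
    · simp [gg, h, ee]

theorem w0_not_mem_img (β : Finset V) : Sum.inr () ∉ β.image Sum.inl := by
  intro h
  obtain ⟨a, -, ha⟩ := Finset.mem_image.1 h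
  exact inl_ne_inr a ha

theorem elt_inj : Function.Injective (eltToFace K v) := by
  have cross : ∀ (α : {σ : Finset V // K.faces σ ∧ σ ≠ {v}}) (σ : QQ),
      α.1.image Sum.inl ≠ σ.1.image (gg v) := by
    intro α σ h
    rcases qq_cases σ with rfl | rfl | rfl
    · have h' : α.1.image Sum.inl = {Sum.inl v} := h.trans img_q0
      have : α.1 = {v} := Finset.image_injective Sum.inl_injective
        (by rw [h', Finset.image_singleton])
      exact α.2.2 this
    · have h' : α.1.image Sum.inl = {Sum.inr ()} := h.trans img_q1
      exact w0_not_mem_img α.1 (by rw [h']; simp)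
    · have h' : α.1.image Sum.inl = ee v := h.trans img_q01
      exact w0_not_mem_img α.1 (by rw [h']; simp [ee])
  intro p q h
  cases p with
  | inl α =>
    cases q with
    | inl β =>
      exact congrArg Sum.inl
        (Subtype.ext (Finset.image_injective Sum.inl_injective h))
    | inr σ => exact absurd h (cross α σ)
  | inr σ =>
    cases q with
    | inl β => exact absurd h.symm (cross β σ)
    | inr τ => exact congrArg Sum.inr (Subtype.ext (Finset.image_injective gg_inj h))

theorem cov_elt {p q : PP K v} (h : p ⋖ q) :
    eltToFace K v p ⊆ eltToFace K v q ∧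
      (eltToFace K v q).card = (eltToFace K v p).card + 1 := by
  rcases cov_sum_cases h with ⟨a, b, rfl, rfl, hab⟩ | ⟨a, b, rfl, rfl, hab⟩
  · rw [covL] at hab
    exact ⟨Finset.image_subset_image hab.1, by
      simp only [eltToFace, Sum.elim_inl, Finset.card_image_of_injective _ Sum.inl_injective]
      exact hab.2⟩
  · rw [covQ] at hab
    exact ⟨Finset.image_subset_image hab.1, by
      simp only [eltToFace, Sum.elim_inr, Finset.card_image_of_injective _ gg_inj]
      exact hab.2⟩

end Stmt19
namespace Stmt19

open Finset

variable {V : Type*} [DecidableEq V] {K : SComplex V} {v : V}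

variable (v) in
def unInl : V ⊕ Unit → V := Sum.elim id (fun _ => v)

theorem unInl_image (β : Finset V) : (β.image Sum.inl).image (unInl v) = β := by
  rw [Finset.image_image]
  ext x
  simp [unInl]

open Classical in
variable (K v) in
noncomputable def faceToElt (σ : Finset (V ⊕ Unit)) : PP K v :=
  if Sum.inr () ∈ σ then
    (if Sum.inl v ∈ σ then Sum.inr q01 else Sum.inr q1)
  else if σ = {Sum.inl v} then Sum.inr q0
  else if h : K.faces (σ.image (unInl v)) ∧ σ.image (unInl v) ≠ {v} then Sum.inl ⟨_, h⟩
  else Sum.inr q0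

theorem fE1 {β : Finset V} (hf : K.faces β) (hne : β ≠ {v}) :
    faceToElt K v (β.image Sum.inl) = Sum.inl ⟨β, hf, hne⟩ := by
  rw [faceToElt, if_neg (w0_not_mem_img β), if_neg, dif_pos]
  · congr 1
    exact Subtype.ext (unInl_image β)
  · rw [unInl_image]
    exact ⟨hf, hne⟩
  · intro h
    apply hne
    apply Finset.image_injective (Sum.inl_injective (α := V) (β := Unit))
    rw [h]
    exact (Finset.image_singleton Sum.inl v).symm

theorem fE2 : faceToElt K v {Sum.inl v} = Sum.inr q0 := by
  rw [faceToElt,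
    if_neg (show Sum.inr () ∉ ({Sum.inl v} : Finset (V ⊕ Unit)) by simp), if_pos rfl]

theorem fE3 : faceToElt K v {Sum.inr ()} = Sum.inr q1 := by
  rw [faceToElt, if_pos (by simp),
    if_neg (show Sum.inl v ∉ ({Sum.inr ()} : Finset (V ⊕ Unit)) by simp)]

theorem fE4 : faceToElt K v (ee v) = Sum.inr q01 := by
  rw [faceToElt, if_pos (by simp [ee]), if_pos (by simp [ee])]

theorem faceToElt_eltToFace (p : PP K v) : faceToElt K v (eltToFace K v p) = p := by
  cases p with
  | inl α =>
    show faceToElt K v (α.1.image Sum.inl) = _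
    rw [fE1 α.2.1 α.2.2]
  | inr σ =>
    show faceToElt K v (σ.1.image (gg v)) = _
    rcases qq_cases σ with rfl | rfl | rfl
    · show faceToElt K v (({0} : Finset (Fin 2)).image (gg v)) = Sum.inr q0
      rw [img_q0]
      exact fE2
    · show faceToElt K v (({1} : Finset (Fin 2)).image (gg v)) = Sum.inr q1
      rw [img_q1]
      exact fE3
    · show faceToElt K v (({0, 1} : Finset (Fin 2)).image (gg v)) = Sum.inr q01
      rw [img_q01]
      exact fE4

open Classical in
variable (K v) in
noncomputable def toF (q : VPair (attachLeaf K v)) : HEdge (PP K v) :=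
  if h : faceToElt K v q.lo ⋖ faceToElt K v q.hi then ⟨_, _, h⟩
  else ⟨Sum.inr q0, Sum.inr q01, cov_inr cov_q0_q01⟩

variable (K v) in
noncomputable def invF (h : HEdge (PP K v)) : VPair (attachLeaf K v) where
  lo := eltToFace K v h.lo
  hi := eltToFace K v h.hi
  lo_face := elt_face h.lo
  hi_face := elt_face h.hi
  lo_sub := (cov_elt h.cov).1
  card_eq := (cov_elt h.cov).2

theorem toF_invF (h : HEdge (PP K v)) : toF K v (invF K v h) = h := by
  have hc : faceToElt K v (invF K v h).lo ⋖ faceToElt K v (invF K v h).hi := by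
    show faceToElt K v (eltToFace K v h.lo) ⋖ faceToElt K v (eltToFace K v h.hi)
    rw [faceToElt_eltToFace, faceToElt_eltToFace]
    exact h.cov
  rw [toF, dif_pos hc]
  exact HEdge.ext'
    (by show faceToElt K v (eltToFace K v h.lo) = h.lo; rw [faceToElt_eltToFace])
    (by show faceToElt K v (eltToFace K v h.hi) = h.hi; rw [faceToElt_eltToFace])

/-- A pair is good if it is not one of the removed (bad) pairs. -/
def Good (q : VPair (attachLeaf K v)) : Prop :=
  q.lo = {Sum.inl v} → q = pv K v

theorem good_spec (hv : K.faces {v}) {q : VPair (attachLeaf K v)} (hg : Good q) :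
    faceToElt K v q.lo ⋖ faceToElt K v q.hi ∧
      eltToFace K v (faceToElt K v q.lo) = q.lo ∧
      eltToFace K v (faceToElt K v q.hi) = q.hi := by
  by_cases hw : Sum.inr () ∈ q.hi
  · rcases pair_with_w0 hw with rfl | rfl
    · have e1 : faceToElt K v (pv K v).lo = Sum.inr q0 := fE2
      have e2 : faceToElt K v (pv K v).hi = Sum.inr q01 := fE4
      rw [e1, e2]
      refine ⟨cov_inr cov_q0_q01, ?_, ?_⟩
      · show ({0} : Finset (Fin 2)).image (gg v) = _
        rw [img_q0]; rfl
      · show ({0, 1} : Finset (Fin 2)).image (gg v) = _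
        rw [img_q01]; rfl
    · have e1 : faceToElt K v (pw K v).lo = Sum.inr q1 := fE3
      have e2 : faceToElt K v (pw K v).hi = Sum.inr q01 := fE4
      rw [e1, e2]
      refine ⟨cov_inr cov_q1_q01, ?_, ?_⟩
      · show ({1} : Finset (Fin 2)).image (gg v) = _
        rw [img_q1]; rfl
      · show ({0, 1} : Finset (Fin 2)).image (gg v) = _
        rw [img_q01]; rfl
  · have hwlo : Sum.inr () ∉ q.lo := fun h => hw (q.lo_sub h)
    obtain ⟨α, hα, hloeq⟩ := face_without_w0 hv q.lo_face hwlo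
    obtain ⟨β, hβ, hhieq⟩ := face_without_w0 hv q.hi_face hw
    have hαne : α ≠ {v} := by
      rintro rfl
      have : q.lo = {Sum.inl v} := by rw [hloeq, Finset.image_singleton]
      rcases hg this with rfl
      exact hw (by simp [pv, ee])
    have hβne : β ≠ {v} := by
      rintro rfl
      have : q.hi.card = 1 := by
        rw [hhieq, Finset.card_image_of_injective _ (Sum.inl_injective (α := V) (β := Unit)),
          Finset.card_singleton]
      have := hi_card_ge (q := q)
      omega
    have hsub : α ⊆ β := by
      rw [← Finset.image_subset_image_iff (Sum.inl_injective (α := V) (β := Unit)), ← hloeq, ← hhieq]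
      exact q.lo_sub
    have hcard : β.card = α.card + 1 := by
      have := q.card_eq
      rw [hloeq, hhieq, Finset.card_image_of_injective _ Sum.inl_injective,
        Finset.card_image_of_injective _ Sum.inl_injective] at this
      exact this
    rw [hloeq, hhieq, fE1 hα hαne, fE1 hβ hβne]
    refine ⟨cov_inl ((covL _ _).2 ⟨hsub, hcard⟩), rfl, rfl⟩

theorem invF_toF (hv : K.faces {v}) {q : VPair (attachLeaf K v)} (hg : Good q) :
    invF K v (toF K v q) = q := by
  obtain ⟨hc, h1, h2⟩ := good_spec hv hg
  rw [toF, dif_pos hc]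
  exact VPair.ext' h1 h2

theorem toF_lo (hv : K.faces {v}) {q : VPair (attachLeaf K v)} (hg : Good q) :
    eltToFace K v (toF K v q).lo = q.lo ∧ eltToFace K v (toF K v q).hi = q.hi := by
  obtain ⟨hc, h1, h2⟩ := good_spec hv hg
  rw [toF, dif_pos hc]
  exact ⟨h1, h2⟩

end Stmt19
namespace Stmt19

open Finset

variable {V : Type*} [DecidableEq V] {K : SComplex V} {v : V}

theorem mem_fimage {A B : Type*} {f : A → B} {s : Finset A} {b : B} :
    b ∈ fimage f s ↔ ∃ a ∈ s, f a = b := by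
  letI := Classical.decEq B
  unfold fimage
  exact Finset.mem_image

theorem invF_inj : Function.Injective (invF K v) := by
  intro h h' he
  exact HEdge.ext' (elt_inj (congrArg VPair.lo he)) (elt_inj (congrArg VPair.hi he))

theorem img_gg_sub_ee (σ : Finset (Fin 2)) : σ.image (gg v) ⊆ ee v := by
  intro x hx
  obtain ⟨i, -, rfl⟩ := Finset.mem_image.1 hx
  rcases Classical.em (i = 0) with rfl | h
  · simp [gg, ee]
  · simp [gg, h, ee]

theorem elt_eq_x0 {p : PP K v} (h : eltToFace K v p = {Sum.inl v}) : p = Sum.inr q0 := by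
  cases p with
  | inl α =>
    exfalso
    apply α.2.2
    apply Finset.image_injective (Sum.inl_injective (α := V) (β := Unit))
    rw [show α.1.image Sum.inl = {Sum.inl v} from h]
    exact (Finset.image_singleton Sum.inl v).symm
  | inr σ =>
    rcases qq_cases σ with rfl | rfl | rfl
    · rfl
    · exfalso
      have h' : ({Sum.inr ()} : Finset (V ⊕ Unit)) = {Sum.inl v} := img_q1.symm.trans h
      exact inl_ne_inr v (Finset.singleton_inj.1 h').symm
    · exfalso
      have h' : ee v = ({Sum.inl v} : Finset (V ⊕ Unit)) := img_q01.symm.trans h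
      have := congrArg Finset.card h'
      rw [card_ee, Finset.card_singleton] at this
      omega

theorem elt_eq_w0 {p : PP K v} (h : eltToFace K v p = {Sum.inr ()}) : p = Sum.inr q1 := by
  cases p with
  | inl α =>
    exfalso
    exact w0_not_mem_img α.1 (by rw [show α.1.image Sum.inl = _ from h]; simp)
  | inr σ =>
    rcases qq_cases σ with rfl | rfl | rfl
    · exfalso
      have h' : ({Sum.inl v} : Finset (V ⊕ Unit)) = {Sum.inr ()} := img_q0.symm.trans h
      exact inl_ne_inr v (Finset.singleton_inj.1 h')
    · rfl
    · exfalso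
      have h' : ee v = ({Sum.inr ()} : Finset (V ⊕ Unit)) := img_q01.symm.trans h
      have := congrArg Finset.card h'
      rw [card_ee, Finset.card_singleton] at this
      omega

theorem hi_q01_of_lo_inr {h : HEdge (PP K v)} {a : QQ} (hl : h.lo = Sum.inr a) :
    h.hi = Sum.inr q01 := by
  rcases cov_sum_cases h.cov with ⟨x, y, hx, hy, hxy⟩ | ⟨x, y, hx, hy, hxy⟩
  · rw [hl] at hx
    exact absurd hx (by simp)
  · rw [hy, q_cov_hi hxy]

theorem invF_lo_x0 {h : HEdge (PP K v)} (hl : eltToFace K v h.lo = {Sum.inl v}) :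
    invF K v h = pv K v := by
  have h0 : h.lo = Sum.inr q0 := elt_eq_x0 hl
  have h1 : h.hi = Sum.inr q01 := hi_q01_of_lo_inr h0
  refine VPair.ext' ?_ ?_
  · show eltToFace K v h.lo = (pv K v).lo
    exact hl
  · show eltToFace K v h.hi = (pv K v).hi
    rw [h1]
    exact img_q01

/-- `toF` maps gradient vector fields of the collapsed complex to faces of the
generalized Morse complex. -/
theorem map_face_aux (hv : K.faces {v}) {S : Finset (VPair (attachLeaf K v))}
    (hS : (MorseComplex (attachLeaf K v)).faces S) (hG : ∀ q ∈ S, Good q) :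
    (genMorse (PP K v)).faces (fimage (toF K v) S) := by
  refine ⟨?_, ?_, ?_⟩
  · obtain ⟨a, ha⟩ := hS.1
    exact ⟨toF K v a, mem_fimage.2 ⟨a, ha, rfl⟩⟩
  · intro h hh h' hh' hne
    obtain ⟨q, hq, rfl⟩ := mem_fimage.1 hh
    obtain ⟨q', hq', rfl⟩ := mem_fimage.1 hh'
    have hqq' : q ≠ q' := fun e => hne (congrArg _ e)
    have compat := hS.2.1 q hq q' hq' hqq'
    obtain ⟨l1, l2⟩ := toF_lo hv (hG q hq)
    obtain ⟨l1', l2'⟩ := toF_lo hv (hG q' hq')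
    refine ⟨?_, ?_, ?_, ?_⟩
    · exact fun e => compat.1 (by rw [← l1, ← l1', e])
    · exact fun e => compat.2.1 (by rw [← l1, ← l2', e])
    · exact fun e => compat.2.2.1 (by rw [← l2, ← l1', e])
    · exact fun e => compat.2.2.2 (by rw [← l2, ← l2', e])
  · rintro ⟨k, hk, c, hc, hp⟩
    have hc' : ∀ i, ∃ a ∈ S, toF K v a = c i := fun i => mem_fimage.1 (hc i)
    choose qf hqf hqe using hc'
    refine hS.2.2 ⟨k, hk, qf, fun i => hqf i, fun i => ?_⟩
    obtain ⟨hcov, hne⟩ := hp i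
    obtain ⟨l1, l2⟩ := toF_lo hv (hG _ (hqf i))
    obtain ⟨l1', l2'⟩ := toF_lo hv (hG _ (hqf (i + 1)))
    rw [← hqe i, ← hqe (i + 1)] at hcov hne
    obtain ⟨hsub, hcard⟩ := cov_elt hcov
    rw [l1', l2] at hsub hcard
    refine ⟨hsub, ?_, by omega⟩
    intro e
    exact hne (elt_inj (by rw [l1', l1, e]))

/-- `invF` maps faces of the generalized Morse complex to gradient vector fields
avoiding the bad pairs. -/
theorem inv_face_aux {T : Finset (HEdge (PP K v))}
    (hT : (genMorse (PP K v)).faces T) :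
    (MorseComplex (attachLeaf K v)).faces (fimage (invF K v) T) ∧
      ∀ q ∈ fimage (invF K v) T, Good q := by
  obtain ⟨hTne, hTm, hTc⟩ := hT
  have hgood : ∀ q ∈ fimage (invF K v) T, Good q := by
    intro q hq hlo
    obtain ⟨h, hh, rfl⟩ := mem_fimage.1 hq
    exact invF_lo_x0 hlo
  refine ⟨⟨?_, ?_, ?_⟩, hgood⟩
  · obtain ⟨a, ha⟩ := hTne
    exact ⟨invF K v a, mem_fimage.2 ⟨a, ha, rfl⟩⟩
  · intro p hp p' hp' hne
    obtain ⟨h, hh, rfl⟩ := mem_fimage.1 hp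
    obtain ⟨h', hh', rfl⟩ := mem_fimage.1 hp'
    have hcompat := hTm h hh h' hh' (fun e => hne (congrArg _ e))
    exact ⟨fun e => hcompat.1 (elt_inj e), fun e => hcompat.2.1 (elt_inj e),
      fun e => hcompat.2.2.1 (elt_inj e), fun e => hcompat.2.2.2 (elt_inj e)⟩
  · rintro ⟨k, hk, c, hc, hp⟩
    have hc' : ∀ i, ∃ a ∈ T, invF K v a = c i := fun i => mem_fimage.1 (hc i)
    choose hf hhf hfe using hc'
    refine hTc ⟨k, hk, hf, fun i => hhf i, fun i => ?_⟩
    obtain ⟨hsub, hne, hcard⟩ := hp i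
    rw [← hfe i, ← hfe (i + 1)] at hsub hne hcard
    have hne' : (hf (i + 1)).lo ≠ (hf i).lo := fun e => hne (congrArg (eltToFace K v) e)
    refine ⟨?_, hne'⟩
    -- case analysis on the sides of the two poset elements
    set p := (hf (i + 1)).lo with hpdef
    set r := (hf i).hi with hrdef
    show p ⋖ r
    have hsub' : eltToFace K v p ⊆ eltToFace K v r := hsub
    have hcard' : (eltToFace K v p).card + 1 = (eltToFace K v r).card := hcard
    cases hpp : p with
    | inl α =>
      cases hrr : r with
      | inl β =>
        rw [hpp, hrr] at hsub' hcard'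
        refine cov_inl ((covL _ _).2 ⟨?_, ?_⟩)
        · exact (Finset.image_subset_image_iff
            (Sum.inl_injective (α := V) (β := Unit))).1 hsub'
        · have := hcard'
          simp only [eltToFace, Sum.elim_inl,
            Finset.card_image_of_injective _ (Sum.inl_injective (α := V) (β := Unit))] at this
          omega
      | inr τ =>
        exfalso
        rw [hpp, hrr] at hsub'
        have hαv : α.1 ⊆ {v} := by
          intro x hx
          have : Sum.inl x ∈ τ.1.image (gg v) :=
            hsub' (Finset.mem_image.2 ⟨x, hx, rfl⟩)
          have := img_gg_sub_ee τ.1 this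
          rw [ee, Finset.mem_insert, Finset.mem_singleton] at this
          rcases this with h' | h'
          · rw [Finset.mem_singleton, Sum.inl_injective h']
          · exact absurd h' (inl_ne_inr x)
        rcases Finset.subset_singleton_iff.1 hαv with h' | h'
        · exact absurd α.2.1 (h' ▸ K.not_empty)
        · exact α.2.2 h'
    | inr σ =>
      cases hrr : r with
      | inr τ =>
        rw [hpp, hrr] at hsub' hcard'
        refine cov_inr ((covQ _ _).2 ⟨?_, ?_⟩)
        · exact (Finset.image_subset_image_iff gg_inj).1 hsub'
        · have := hcard'
          simp only [eltToFace, Sum.elim_inr,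
            Finset.card_image_of_injective _ gg_inj] at this
          omega
      | inl β =>
        -- the critical cross case: leads to a contradiction
        exfalso
        rw [hpp, hrr] at hsub'
        have h1σ : (1 : Fin 2) ∉ σ.1 := by
          intro h1
          refine w0_not_mem_img β.1 (hsub' ?_)
          refine Finset.mem_image.2 ⟨1, h1, ?_⟩
          simp [gg]
        have hσ0 : σ = q0 := by
          rcases qq_cases σ with h' | h' | h'
          · exact h'
          · refine absurd ?_ h1σ
            rw [h']
            decide
          · refine absurd ?_ h1σ
            rw [h']
            decide
        -- hence hf (i+1) is the edge ({0}, {0,1})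
        have hlo1 : (hf (i + 1)).lo = Sum.inr q0 := by rw [← hpdef, hpp, hσ0]
        have hhi1 : (hf (i + 1)).hi = Sum.inr q01 := hi_q01_of_lo_inr hlo1
        -- use the next step of the cycle
        obtain ⟨hsub2, hne2, hcard2⟩ := hp (i + 1)
        rw [← hfe (i + 1), ← hfe (i + 1 + 1)] at hsub2 hne2 hcard2
        have hsub2' : eltToFace K v (hf (i + 1 + 1)).lo ⊆ eltToFace K v (hf (i + 1)).hi :=
          hsub2
        have hne2' : eltToFace K v (hf (i + 1 + 1)).lo ≠ eltToFace K v (hf (i + 1)).lo :=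
          hne2
        have hcard2' :
            (eltToFace K v (hf (i + 1 + 1)).lo).card + 1 =
              (eltToFace K v (hf (i + 1)).hi).card := hcard2
        have hhiee : eltToFace K v (hf (i + 1)).hi = ee v := by
          rw [hhi1]; exact img_q01
        have hlox0 : eltToFace K v (hf (i + 1)).lo = {Sum.inl v} := by
          rw [hlo1]; exact img_q0
        rw [hhiee] at hsub2' hcard2'
        rw [hlox0] at hne2'
        rw [card_ee] at hcard2'
        have hcard1 : (eltToFace K v (hf (i + 1 + 1)).lo).card = 1 := by omega
        obtain ⟨x, hx⟩ := Finset.card_eq_one.1 hcard1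
        have hxee : x ∈ ee v := hsub2' (by rw [hx]; simp)
        rw [ee, Finset.mem_insert, Finset.mem_singleton] at hxee
        rcases hxee with rfl | rfl
        · exact hne2' hx
        · -- hf (i+2) is the edge ({1}, {0,1}); contradiction with the matching
          have hlo2 : (hf (i + 1 + 1)).lo = Sum.inr q1 := elt_eq_w0 hx
          have hhi2 : (hf (i + 1 + 1)).hi = Sum.inr q01 := hi_q01_of_lo_inr hlo2
          have hne12 : hf (i + 1) ≠ hf (i + 1 + 1) := by
            intro e
            rw [← e, hlo1] at hlo2
            have : q0 = q1 := by
              injection hlo2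
            exact absurd (congrArg Subtype.val this) (by decide)
          have := (hTm _ (hhf (i + 1)) _ (hhf (i + 1 + 1)) hne12).2.2.2
          rw [hhi1, hhi2] at this
          exact this rfl

end Stmt19


/-- `M(K ∨_v ℓ)` strongly collapses to the generalized Morse
complex `f((H(K) − v) ⊔ H(ℓ))`. -/
theorem stmt_19 {V : Type*} [Fintype V] [DecidableEq V] (K : SComplex V) (v : V)
    (hv : K.faces {v}) :
    ∃ G, SCTo (MorseComplex (attachLeaf K v)).faces G ∧
      Nonempty (ComplexIso G
        (genMorse ({σ : Finset V // K.faces σ ∧ σ ≠ {v}} ⊕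
          {σ : Finset (Fin 2) // (graphComplex (SimpleGraph.pathGraph 2)).faces σ})).faces) := by
  classical
  refine ⟨Stmt19.Fr K v (Stmt19.Bads K v), Stmt19.sc_main, ⟨?_⟩⟩
  refine
    { toFun := Stmt19.toF K v
      invFun := Stmt19.invF K v
      left_inv := ?_
      right_inv := ?_
      map_face := ?_
      inv_face := ?_ }
  · intro x hx
    obtain ⟨-, hgood⟩ := Stmt19.Fr_Bads_iff.1 hx
    exact Stmt19.invF_toF hv (hgood x (Finset.mem_singleton_self x))
  · intro y _
    exact Stmt19.toF_invF y
  · intro σ hσ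
    obtain ⟨hfaces, hgood⟩ := Stmt19.Fr_Bads_iff.1 hσ
    exact Stmt19.map_face_aux hv hfaces hgood
  · intro τ hτ
    obtain ⟨h1, h2⟩ := Stmt19.inv_face_aux hτ
    exact Stmt19.Fr_Bads_iff.2 ⟨h1, h2⟩
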